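/- For all integers k ≥ 1, 2(β_k - 1) + √((μ_{k-1}-1)(μ_k-1)) = μ_k - 1, i.e., 2(1+√2)^{k-1} + √((μ_{k-1}-1)(μ_k-1)) = μ_k - 1. -/
import Mathlib


/-- β_i = 1 + (1+√2)^{i-1} (real exponent). -/
noncomputable def beta (i : ℕ) : ℝ := 1 + (1 + Real.sqrt 2) ^ ((i : ℝ) - 1)

/-- for all k ≥ 1,
2(β_k - 1) + √((μ_{k-1}-1)(μ_k-1)) = μ_k - 1, i.e.
2(1+√2)^{k-1} + √((μ_{k-1}-1)(μ_k-1)) = μ_k - 1. -/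
theorem stmt6 (α μ : ℕ → ℝ)
    (hμ0 : μ 0 = 2)
    (hμ : ∀ i, μ (i + 1) = μ i + 2 * (α i + beta (i + 1) - 2))
    (hα : ∀ i, 1 < α i ∧
      2 * (α i - 1) ^ 2 + (μ i - 1) * (α i - 1) - (beta (i + 1) - 1) * (μ i - 1) = 0) :
    ∀ k : ℕ, 1 ≤ k →
      (2 * (beta k - 1) + Real.sqrt ((μ (k - 1) - 1) * (μ k - 1)) = μ k - 1) ∧
      (2 * (1 + Real.sqrt 2) ^ ((k : ℝ) - 1)
        + Real.sqrt ((μ (k - 1) - 1) * (μ k - 1)) = μ k - 1) := by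
  have hs2 : (1:ℝ) ≤ 1 + Real.sqrt 2 := by nlinarith [Real.sqrt_nonneg 2]
  have hbcast : ∀ i : ℕ, beta (i + 1) = 1 + (1 + Real.sqrt 2) ^ (i : ℝ) := by
    intro i
    unfold beta
    norm_num
  have hbge : ∀ i : ℕ, (1:ℝ) ≤ (1 + Real.sqrt 2) ^ (i : ℝ) := by
    intro i
    exact Real.one_le_rpow hs2 (by positivity)
  have hμ2 : ∀ i, 2 ≤ μ i := by
    intro i
    induction i with
    | zero => rw [hμ0]
    | succ n ih =>
      have h1 := (hα n).1
      have h2 := hbge n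
      rw [hμ n, hbcast n]
      nlinarith
  intro k hk
  obtain ⟨i, rfl⟩ : ∃ i, k = i + 1 := ⟨k - 1, (Nat.succ_pred_eq_of_pos hk).symm⟩
  set a := α i - 1 with ha_def
  set m := μ i - 1 with hm_def
  set b := (1 + Real.sqrt 2) ^ (i : ℝ) with hb_def
  have ha : 0 < a := by have := (hα i).1; simp [ha_def]; linarith
  have hm : 1 ≤ m := by have := hμ2 i; simp [hm_def]; linarith
  have hq : 2 * a ^ 2 + m * a - b * m = 0 := by
    have := (hα i).2
    rw [hbcast i] at this
    simp only [ha_def, hm_def, hb_def]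
    linear_combination this
  have hM : μ (i + 1) - 1 = m + 2 * a + 2 * b := by
    rw [hμ i, hbcast i]; simp only [ha_def, hm_def, hb_def]; ring
  have hmul : m * (μ (i + 1) - 1) = (m + 2 * a) ^ 2 := by
    rw [hM]; nlinarith
  have hsq : Real.sqrt ((μ (i + 1 - 1) - 1) * (μ (i + 1) - 1)) = m + 2 * a := by
    simp only [Nat.add_sub_cancel]
    rw [← hm_def, hmul, Real.sqrt_sq (by linarith)]
  constructor
  · rw [hsq, hbcast i, hM]; ring
  · rw [hsq, hM]
    have : ((i + 1 : ℕ) : ℝ) - 1 = (i : ℝ) := by push_cast; ring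
    rw [this, ← hb_def]; ring
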